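/- arXiv:2103.11134 — 3 statements merged into one kernel-verified Lean document; each statement's English description precedes it below -/
import Mathlib

section
/- Every Lyndon word of length at least 2 admits a standard factorization: u = vw where v and w are Lyndon words, w is the lexicographically smallest proper nonempty suffix of u, and v < w. -/
open List in
private lemma lex_append_self {α} [LinearOrder α] (s t : List α) (ht : t ≠ []) :
    Lex (· < ·) s (s ++ t) := by
  induction s with
  | nil => cases t with
    | nil => exact absurd rfl ht
    | cons a l => exact Lex.nil
  | cons a l ih => exact Lex.cons ih

open List in
private lemma lex_cancel_left {α} [LinearOrder α] (p : List α) {a b : List α}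
    (h : Lex (· < ·) (p ++ a) (p ++ b)) : Lex (· < ·) a b := by
  induction p with
  | nil => exact h
  | cons x xs ih => exact ih ((List.lex_cons_iff).1 h)

open List in
private lemma lex_append_or_prefix {α} [LinearOrder α] {b v : List α} (w : List α)
    (h : Lex (· < ·) b v) : Lex (· < ·) (b ++ w) (v ++ w) ∨ b <+: v := by
  induction h with
  | nil => exact Or.inr (List.nil_prefix)
  | @cons a l₁ l₂ h ih =>
    rcases ih with h' | h'
    · exact Or.inl (List.Lex.cons h')
    · exact Or.inr (List.cons_prefix_cons.2 ⟨rfl, h'⟩)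
  | rel h => exact Or.inl (List.Lex.rel h)

/-- A word is a Lyndon word if it is nonempty and strictly smaller (lexicographically)
than every proper nonempty suffix of itself. -/
def IsLyndon {α : Type*} [LinearOrder α] (u : List α) : Prop :=
  u ≠ [] ∧ ∀ v w : List α, v ≠ [] → w ≠ [] → u = v ++ w → List.Lex (· < ·) u w

/-- Every Lyndon word of length at least 2 admits a standard factorization `u = v ++ w`
with `v`, `w` Lyndon, `w` the lexicographically smallest proper nonempty suffix of `u`,
and `v < w`. -/
theorem lyndon_standard_factorization {α : Type*} [LinearOrder α] (u : List α)
    (hu : IsLyndon u) (hlen : 2 ≤ u.length) :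
    ∃ v w : List α, IsLyndon v ∧ IsLyndon w ∧ u = v ++ w ∧
      List.Lex (· < ·) v w ∧
      (∀ v' w' : List α, v' ≠ [] → w' ≠ [] → u = v' ++ w' →
        w = w' ∨ List.Lex (· < ·) w w') := by
  classical
  obtain ⟨hne, hL⟩ := hu
  set S : List (List α) :=
    u.tails.filter (fun t => decide (t ≠ [] ∧ t.length < u.length)) with hS
  -- S is nonempty: u.tail ∈ S
  have htail : u.tail ∈ S := by
    rw [hS, List.mem_filter]
    constructor
    · exact (List.mem_tails _ _).2 (List.tail_suffix u)
    · simp only [decide_eq_true_eq]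
      constructor
      · intro h
        have := congrArg List.length h
        simp [List.length_tail] at this
        omega
      · cases u with
        | nil => simp at hlen
        | cons a l => simp
  have hSne : S ≠ [] := fun h => by rw [h] at htail; exact absurd htail List.not_mem_nil
  obtain ⟨w, hwmin⟩ : ∃ w : List α, S.minimum = (w : WithTop (List α)) := by
    cases h : S.minimum with
    | top => exact absurd h (by convert List.minimum_ne_top_of_ne_nil hSne)
    | coe w => exact ⟨w, rfl⟩
  have hwS : w ∈ S := List.minimum_mem hwmin
  have hmemS : ∀ t : List α, t ∈ S ↔ (t <:+ u ∧ t ≠ [] ∧ t.length < u.length) := by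
    intro t
    rw [hS, List.mem_filter, List.mem_tails]
    simp only [decide_eq_true_eq]
  obtain ⟨hwsuf, hwne, hwlen⟩ := (hmemS w).1 hwS
  obtain ⟨v, hv⟩ := hwsuf
  have hvne : v ≠ [] := by
    intro h
    rw [h, List.nil_append] at hv
    rw [hv] at hwlen
    omega
  -- minimality
  have hmin : ∀ v' w' : List α, v' ≠ [] → w' ≠ [] → u = v' ++ w' →
      w = w' ∨ List.Lex (· < ·) w w' := by
    intro v' w' hv' hw' huv
    have hw'S : w' ∈ S := by
      rw [hmemS]
      refine ⟨⟨v', huv.symm⟩, hw', ?_⟩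
      rw [huv, List.length_append]
      cases v' with
      | nil => exact absurd rfl hv'
      | cons a l => simp
    have := List.minimum_le_of_mem (m := w) hw'S (by convert hwmin)
    rcases lt_or_eq_of_le this with h | h
    · exact Or.inr h
    · exact Or.inl h
  refine ⟨v, w, ?_, ?_, hv.symm, ?_, hmin⟩
  · -- v Lyndon
    refine ⟨hvne, ?_⟩
    intro a b ha hb hab
    have huw : List.Lex (· < ·) (v ++ w) (b ++ w) := by
      rw [hv]
      exact hL a (b ++ w) ha (by simp [hb]) (by rw [← hv, hab, List.append_assoc])
    rcases lt_trichotomy v b with h | h | h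
    · exact h
    · exfalso
      have := congrArg List.length hab
      rw [h, List.length_append] at this
      cases a with
      | nil => exact absurd rfl ha
      | cons x l => simp at this
    · rcases lex_append_or_prefix w h with h' | h'
      · exact absurd huw (asymm h')
      · obtain ⟨c, hc⟩ := h'
        have hcne : c ≠ [] := by
          intro hceq
          rw [hceq, List.append_nil] at hc
          have := congrArg List.length hab
          rw [← hc, List.length_append] at this
          cases a with
          | nil => exact absurd rfl ha
          | cons x l => simp at this
        have hsplit : u = b ++ (c ++ w) := by
          rw [← hv, ← hc, List.append_assoc]
        rcases hmin b (c ++ w) hb (by simp [hcne]) hsplit with heq | hlt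
        · exfalso
          have := congrArg List.length heq
          rw [List.length_append] at this
          cases c with
          | nil => exact absurd rfl hcne
          | cons x l => simp at this
        · exfalso
          have : List.Lex (· < ·) (c ++ w) w := by
            apply lex_cancel_left b
            rw [← List.append_assoc, hc]
            exact huw
          exact asymm hlt this
  · -- w Lyndon
    refine ⟨hwne, ?_⟩
    intro a b ha hb hab
    have hsplit : u = (v ++ a) ++ b := by rw [← hv, hab, List.append_assoc]
    rcases hmin (v ++ a) b (by simp [hvne]) hb hsplit with heq | hlt
    · exfalso
      have := congrArg List.length hab
      rw [← heq, List.length_append] at this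
      cases a with
      | nil => exact absurd rfl ha
      | cons x l => simp at this
    · rw [hab]; rw [hab] at hlt; exact hlt
  · -- v < w
    have h1 : List.Lex (· < ·) v u := by
      rw [← hv]
      exact lex_append_self v w hwne
    have h2 : List.Lex (· < ·) u w := hL v w hvne hwne hv.symm
    exact List.lex_trans (fun h1 h2 => lt_trans h1 h2) h1 h2
end

section
/- Let F be a free group on generators x and y. Then the left-normed commutator (x, y, y, …, y) with m−1 occurrences of y (defined by c₂ = (x,y), c_k = (c_{k−1}, y)) lies in F_{(m)} but not in F_{(m+1)}, where F_{(i)} denotes the lower central series. -/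
/-- The left-normed commutators `c₂ = (x,y)`, `c_k = (c_{k-1}, y)` in the free group on
two generators, where `(a,b) = a⁻¹b⁻¹ab`.  Here `leftComm k` is `c_{k+1}`, so
`leftComm (m-1)` has `m-1` occurrences of `y`. -/
def leftComm : ℕ → FreeGroup (Fin 2)
  | 0 => FreeGroup.of 0
  | k + 1 => (leftComm k)⁻¹ * (FreeGroup.of 1)⁻¹ * leftComm k * FreeGroup.of 1

namespace LCAux

open scoped commutatorElement

variable (m : ℕ)

abbrev R (m : ℕ) := Matrix (Fin (m + 1)) (Fin (m + 1)) ℤ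

/-- `P k A` : `A` is supported on entries at distance `≥ k` above the diagonal. -/
def P (k : ℕ) (A : R m) : Prop := ∀ i j : Fin (m + 1), (j : ℕ) < (i : ℕ) + k → A i j = 0

variable {m}

theorem P_zero (k : ℕ) : P m k 0 := fun _ _ _ => rfl

theorem P_one : P m 0 (1 : R m) := by
  intro i j h
  have hne : i ≠ j := by intro e; subst e; omega
  exact Matrix.one_apply_ne hne

theorem P_add {k : ℕ} {A B : R m} (hA : P m k A) (hB : P m k B) : P m k (A + B) := by
  intro i j h; simp [Matrix.add_apply, hA i j h, hB i j h]

theorem P_neg {k : ℕ} {A : R m} (hA : P m k A) : P m k (-A) := by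
  intro i j h; simp [Matrix.neg_apply, hA i j h]

theorem P_mono {k l : ℕ} (hkl : k ≤ l) {A : R m} (hA : P m l A) : P m k A := by
  intro i j h; exact hA i j (by omega)

theorem P_mul {k l : ℕ} {A B : R m} (hA : P m k A) (hB : P m l B) : P m (k + l) (A * B) := by
  intro i j h
  rw [Matrix.mul_apply]
  apply Finset.sum_eq_zero
  intro x _
  by_cases hx : (x : ℕ) < (i : ℕ) + k
  · rw [hA i x hx, zero_mul]
  · rw [hB x j (by omega), mul_zero]

theorem P_pow {k : ℕ} {A : R m} (hA : P m k A) : ∀ t, P m (t * k) (A ^ t)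
  | 0 => by simpa using P_mono (Nat.zero_le _) P_one
  | t + 1 => by
      have := P_mul (P_pow hA t) hA
      rw [← pow_succ] at this
      simpa [Nat.succ_mul] using this

theorem P_eq_zero {A : R m} (hA : P m (m + 1) A) : A = 0 := by
  ext i j
  exact hA i j (by omega)


/-- `E j` is the matrix unit with a `1` in position `(0, j)` (zero if `j > m`). -/
def E (m j : ℕ) : R m :=
  Matrix.of fun a b => if (a : ℕ) = 0 ∧ (b : ℕ) = j then (1 : ℤ) else 0

/-- The shift matrix `S = ∑_{i=1}^{m-1} E_{i,i+1}`. -/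
def S (m : ℕ) : R m :=
  Matrix.of fun a b => if (b : ℕ) = (a : ℕ) + 1 ∧ 1 ≤ (a : ℕ) then (1 : ℤ) else 0

theorem P_E {j : ℕ} (hj : 1 ≤ j) : P m 1 (E m j) := by
  intro i l h
  simp only [E, Matrix.of_apply, ite_eq_right_iff]
  rintro ⟨h0, h1⟩
  omega

theorem P_S : P m 1 (S m) := by
  intro i l h
  simp only [S, Matrix.of_apply, ite_eq_right_iff]
  rintro ⟨h0, h1⟩
  omega

theorem E_mul_S {j : ℕ} (hj : 1 ≤ j) : E m j * S m = E m (j + 1) := by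
  ext a b
  rw [Matrix.mul_apply]
  by_cases hjm : j ≤ m
  · rw [Finset.sum_eq_single (⟨j, by omega⟩ : Fin (m + 1))]
    · simp only [E, S, Matrix.of_apply]
      by_cases ha : (a : ℕ) = 0
      · by_cases hb : (b : ℕ) = j + 1 <;> simp [ha, hb, hj]
      · simp [ha]
    · intro x _ hx
      simp only [E, S, Matrix.of_apply]
      have : ¬ ((a : ℕ) = 0 ∧ (x : ℕ) = j) := by
        rintro ⟨-, h2⟩
        exact hx (by apply Fin.ext; simp [h2])
      rw [if_neg this, zero_mul]
    · intro h; exact absurd (Finset.mem_univ _) h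
  · have h1 : ∀ x : Fin (m + 1),
        (E m j a x) * (S m x b) = 0 := by
      intro x
      simp only [E, Matrix.of_apply, ite_eq_right_iff]
      have : ¬ ((a : ℕ) = 0 ∧ (x : ℕ) = j) := by rintro ⟨-, h2⟩; omega
      rw [if_neg this, zero_mul]
    rw [Finset.sum_eq_zero fun x _ => h1 x]
    simp only [E, Matrix.of_apply]
    have : ¬ ((a : ℕ) = 0 ∧ (b : ℕ) = j + 1) := by rintro ⟨-, h2⟩; omega
    rw [if_neg this]

theorem S_mul_E (j : ℕ) : S m * E m j = 0 := by
  ext a b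
  rw [Matrix.mul_apply]
  apply Finset.sum_eq_zero
  intro x _
  simp only [E, S, Matrix.of_apply]
  by_cases h1 : (x : ℕ) = (a : ℕ) + 1 ∧ 1 ≤ (a : ℕ)
  · have : ¬ ((x : ℕ) = 0 ∧ (b : ℕ) = j) := by rintro ⟨h2, -⟩; omega
    rw [if_neg this, mul_zero]
  · rw [if_neg h1, zero_mul]

theorem E_mul_E {j j' : ℕ} (hj : 1 ≤ j) : E m j * E m j' = 0 := by
  ext a b
  rw [Matrix.mul_apply]
  apply Finset.sum_eq_zero
  intro x _
  simp only [E, Matrix.of_apply]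
  by_cases h1 : (a : ℕ) = 0 ∧ (x : ℕ) = j
  · have : ¬ ((x : ℕ) = 0 ∧ (b : ℕ) = j') := by rintro ⟨h2, -⟩; omega
    rw [if_neg this, mul_zero]
  · rw [if_neg h1, zero_mul]

/-- The key matrix identity `(1+S)(1+E_{0,j})(1+E_{0,j+1}) = (1+E_{0,j})(1+S)`. -/
theorem key {j : ℕ} (hj : 1 ≤ j) :
    (1 + S m) * (1 + E m j) * (1 + E m (j + 1)) = (1 + E m j) * (1 + S m) := by
  have h1 := S_mul_E (m := m) j
  have h2 := S_mul_E (m := m) (j + 1)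
  have h3 := E_mul_E (m := m) (j' := j + 1) hj
  have h4 := E_mul_S (m := m) hj
  simp only [mul_add, add_mul, mul_one, one_mul, h1, h2, h3, h4, add_zero, zero_add,
    mul_zero, zero_mul]
  abel


theorem P_sum {k : ℕ} {ι : Type*} {s : Finset ι} {f : ι → R m}
    (h : ∀ i ∈ s, P m k (f i)) : P m k (∑ i ∈ s, f i) := by
  intro i j hij
  rw [Matrix.sum_apply]
  exact Finset.sum_eq_zero fun x hx => h x hx i j hij

theorem nilp {a : R m} (ha : P m 1 a) : a ^ (m + 1) = 0 := by
  apply P_eq_zero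
  simpa using P_pow ha (m + 1)

/-- The geometric-series inverse of `1 + a` for `a` strictly upper triangular. -/
theorem geom_inv {a : R m} (ha : P m 1 a) :
    (∑ i ∈ Finset.range (m + 1), (-a) ^ i) * (1 + a) = 1 ∧
    (1 + a) * (∑ i ∈ Finset.range (m + 1), (-a) ^ i) = 1 := by
  have hn : (-a) ^ (m + 1) = 0 := by
    rw [neg_pow, nilp ha, mul_zero]
  have h1 := geom_sum_mul (-a) (m + 1)
  have h2 := mul_geom_sum (-a) (m + 1)
  have hne : -a - 1 = -(1 + a) := by abel
  rw [hn, hne, zero_sub] at h1 h2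
  rw [mul_neg] at h1
  rw [neg_mul] at h2
  exact ⟨neg_injective h1, neg_injective h2⟩

theorem inv_val {A : (R m)ˣ} {a : R m} (hA : (A : R m) = 1 + a) (ha : P m 1 a) :
    ((A⁻¹ : (R m)ˣ) : R m) = ∑ i ∈ Finset.range (m + 1), (-a) ^ i := by
  apply Units.inv_eq_of_mul_eq_one_right
  rw [hA]
  exact (geom_inv ha).2

/-- The filtration subgroups of the unitriangular group. -/
def G (m k : ℕ) : Subgroup (R m)ˣ where
  carrier := {A | P m (k + 1) ((A : R m) - 1)}
  one_mem' := by simpa using P_zero (m := m) (k + 1)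
  mul_mem' := by
    intro A B hA hB
    have e : ((A * B : (R m)ˣ) : R m) - 1 =
        ((A : R m) - 1) * ((B : R m) - 1) + ((A : R m) - 1) + ((B : R m) - 1) := by
      rw [Units.val_mul]; noncomm_ring
    rw [Set.mem_setOf_eq, e]
    exact P_add (P_add (P_mono (by omega) (P_mul hA hB)) hA) hB
  inv_mem' := by
    intro A hA
    have ha : P m (k + 1) ((A : R m) - 1) := hA
    have ha1 : P m 1 ((A : R m) - 1) := P_mono (by omega) ha
    have hv : ((A⁻¹ : (R m)ˣ) : R m) =
        ∑ i ∈ Finset.range (m + 1), (-((A : R m) - 1)) ^ i :=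
      inv_val (by abel) ha1
    rw [Set.mem_setOf_eq, hv, Finset.sum_range_succ', pow_zero, add_sub_cancel_right]
    apply P_sum
    intro i _
    exact P_mono (by nlinarith) (P_pow (P_neg ha) (i + 1))

theorem mem_G {k : ℕ} {A : (R m)ˣ} : A ∈ G m k ↔ P m (k + 1) ((A : R m) - 1) := Iff.rfl

theorem G_mono {k l : ℕ} (h : k ≤ l) : G m l ≤ G m k := by
  intro A hA
  exact P_mono (by omega) hA

theorem commutator_G {k : ℕ} {A B : (R m)ˣ} (hA : A ∈ G m k) (hB : B ∈ G m 0) :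
    ⁅A, B⁆ ∈ G m (k + 1) := by
  have hA' : P m (k + 1) ((A : R m) - 1) := hA
  have hB' : P m 1 ((B : R m) - 1) := hB
  have hC : (A⁻¹ * B⁻¹ : (R m)ˣ) ∈ G m 0 :=
    mul_mem (inv_mem (G_mono (Nat.zero_le k) hA)) (inv_mem hB)
  have hc : P m 1 ((A⁻¹ : (R m)ˣ) * ((B⁻¹ : (R m)ˣ) : R m) - 1) := by
    have := (mem_G.mp hC)
    rwa [Units.val_mul] at this
  have e2 : ((B : R m) * A) * ((A⁻¹ : (R m)ˣ) * ((B⁻¹ : (R m)ˣ) : R m)) = 1 := by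
    have h := congrArg Units.val (show (B * A * (A⁻¹ * B⁻¹) : (R m)ˣ) = 1 by group)
    simpa [Units.val_mul, mul_assoc] using h
  have e1 : ((⁅A, B⁆ : (R m)ˣ) : R m) =
      ((A : R m) * B) * ((A⁻¹ : (R m)ˣ) * ((B⁻¹ : (R m)ˣ) : R m)) := by
    rw [commutatorElement_def]
    simp [Units.val_mul, mul_assoc]
  have e : ((⁅A, B⁆ : (R m)ˣ) : R m) - 1 =
      ((A : R m) * B - (B : R m) * A) * ((A⁻¹ : (R m)ˣ) * ((B⁻¹ : (R m)ˣ) : R m)) := by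
    rw [sub_mul, e2, e1]
  have hs : P m (k + 2) ((A : R m) * B - (B : R m) * A) := by
    have e3 : (A : R m) * B - (B : R m) * A =
        ((A : R m) - 1) * ((B : R m) - 1) - ((B : R m) - 1) * ((A : R m) - 1) := by
      noncomm_ring
    have h1 := P_mul hA' hB'
    have h2 := P_mul hB' hA'
    rw [show 1 + (k + 1) = k + 2 by omega] at h2
    rw [e3, sub_eq_add_neg]
    exact P_add h1 (P_neg h2)
  rw [mem_G, e]
  have e4 : ((A : R m) * B - (B : R m) * A) *
        ((A⁻¹ : (R m)ˣ) * ((B⁻¹ : (R m)ˣ) : R m)) =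
      ((A : R m) * B - (B : R m) * A) *
        ((A⁻¹ : (R m)ˣ) * ((B⁻¹ : (R m)ˣ) : R m) - 1) +
      ((A : R m) * B - (B : R m) * A) := by noncomm_ring
  rw [e4]
  exact P_add (P_mono (by omega) (P_mul hs hc)) hs

/-- The units `X = 1 + E_{0,1}` and `Y = 1 + S`. -/
def Xu (m : ℕ) : (R m)ˣ where
  val := 1 + E m 1
  inv := 1 - E m 1
  val_inv := by
    rw [add_mul, one_mul, mul_sub, mul_one, E_mul_E (le_refl 1)]
    abel
  inv_val := by
    rw [sub_mul, one_mul, mul_add, mul_one, E_mul_E (le_refl 1)]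
    abel

def Yu (m : ℕ) : (R m)ˣ where
  val := 1 + S m
  inv := ∑ i ∈ Finset.range (m + 1), (-(S m)) ^ i
  val_inv := (geom_inv P_S).2
  inv_val := (geom_inv P_S).1

/-- The representation of the free group. -/
def phi (m : ℕ) : FreeGroup (Fin 2) →* (R m)ˣ := FreeGroup.lift ![Xu m, Yu m]

theorem phi_of0 : phi m (FreeGroup.of 0) = Xu m := by
  simp [phi]

theorem phi_of1 : phi m (FreeGroup.of 1) = Yu m := by
  simp [phi]

theorem phi_mem_G0 (g : FreeGroup (Fin 2)) : phi m g ∈ G m 0 := by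
  induction g using FreeGroup.induction_on with
  | C1 => simpa using one_mem (G m 0)
  | of i =>
      fin_cases i
      · show phi m (FreeGroup.of 0) ∈ G m 0
        rw [phi_of0, mem_G]
        simpa [Xu] using P_E (m := m) (j := 1) le_rfl
      · show phi m (FreeGroup.of 1) ∈ G m 0
        rw [phi_of1, mem_G]
        simpa [Yu] using P_S (m := m)
  | inv_of i h => simpa using inv_mem h
  | mul g h hg hh => simpa using mul_mem hg hh

theorem lcs_le (k : ℕ) :
    Subgroup.lowerCentralSeries (⊤ : Subgroup (FreeGroup (Fin 2))) k ≤ (G m k).comap (phi m) := by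
  induction k with
  | zero => exact fun g _ => phi_mem_G0 g
  | succ k ih =>
      show ⁅Subgroup.lowerCentralSeries (⊤ : Subgroup (FreeGroup (Fin 2))) k, ⊤⁆ ≤ _
      rw [Subgroup.commutator_le]
      intro g hg h _
      rw [Subgroup.mem_comap, map_commutatorElement]
      exact commutator_G (ih hg) (phi_mem_G0 h)

theorem phi_leftComm : ∀ k : ℕ, ((phi m (leftComm k) : (R m)ˣ) : R m) = 1 + E m (k + 1)
  | 0 => by rw [show leftComm 0 = FreeGroup.of 0 from rfl, phi_of0]; rfl
  | k + 1 => by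
      have ih := phi_leftComm k
      have hrel : (Yu m * phi m (leftComm k)) * phi m (leftComm (k + 1)) =
          phi m (leftComm k) * Yu m := by
        rw [show leftComm (k + 1) =
            (leftComm k)⁻¹ * (FreeGroup.of 1)⁻¹ * leftComm k * FreeGroup.of 1 from rfl]
        rw [map_mul, map_mul, map_mul, map_inv, map_inv, phi_of1]
        group
      have hval := congrArg Units.val hrel
      rw [Units.val_mul, Units.val_mul, Units.val_mul, ih] at hval
      have hkey := key (m := m) (j := k + 1) (by omega)
      have : (1 + S m) = ((Yu m : (R m)ˣ) : R m) := rfl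
      rw [this] at hkey
      refine (Units.mul_right_inj (Yu m * phi m (leftComm k))).mp ?_
      rw [Units.val_mul, ih, hval, hkey]


theorem leftComm_mem : ∀ k : ℕ, leftComm k ∈ Subgroup.lowerCentralSeries (⊤ : Subgroup (FreeGroup (Fin 2))) k
  | 0 => Subgroup.mem_top _
  | k + 1 => by
      have h : leftComm (k + 1) = ⁅(leftComm k)⁻¹, (FreeGroup.of 1)⁻¹⁆ := by
        rw [commutatorElement_def]
        simp [leftComm, mul_assoc]
      rw [h]
      show ⁅(leftComm k)⁻¹, (FreeGroup.of 1)⁻¹⁆ ∈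
        ⁅Subgroup.lowerCentralSeries (⊤ : Subgroup (FreeGroup (Fin 2))) k, ⊤⁆
      exact Subgroup.commutator_mem_commutator (inv_mem (leftComm_mem k)) (Subgroup.mem_top _)

end LCAux

/-- In the free group `F` on `{x, y}`, the left-normed commutator `(x, y, …, y)` with
`m-1` occurrences of `y` lies in `F_{(m)}` but not in `F_{(m+1)}`, where
`F_{(k)} = lowerCentralSeries F (k-1)`. -/
theorem leftComm_mem_lcs_not_mem_succ (m : ℕ) (hm : 2 ≤ m) :
    leftComm (m - 1) ∈ Subgroup.lowerCentralSeries (⊤ : Subgroup (FreeGroup (Fin 2))) (m - 1) ∧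
    leftComm (m - 1) ∉ Subgroup.lowerCentralSeries (⊤ : Subgroup (FreeGroup (Fin 2))) m := by
  refine ⟨LCAux.leftComm_mem (m - 1), fun h => ?_⟩
  obtain ⟨j, rfl⟩ : ∃ j, m = j + 1 := ⟨m - 1, by omega⟩
  simp only [Nat.add_sub_cancel] at h ⊢
  have hG : LCAux.phi (j + 1) (leftComm j) ∈ LCAux.G (j + 1) (j + 1) :=
    LCAux.lcs_le (j + 1) h
  have hP := LCAux.mem_G.mp hG
  have hval := LCAux.phi_leftComm (m := j + 1) j
  rw [hval, add_sub_cancel_left] at hP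
  have := hP 0 ⟨j + 1, by omega⟩ (by simp)
  simp [LCAux.E, Matrix.of_apply] at this
end

section
/- Let Γ = (X, E) be a simple graph and let L(X; Γ) be the free partially commutative Lie ℤ-algebra presented by generators X with relations [x, y] = 0 for all {x, y} ∈ E. If x, y ∈ X are distinct and {x, y} ∉ E, then [x, y] ≠ 0 in L(X; Γ). -/
/-- The Lie ideal of the free Lie algebra generated by the brackets `[x,y]` of
adjacent vertices of a simple graph `Γ`. -/
noncomputable def graphLieIdeal {X : Type*} (Γ : SimpleGraph X) :
    LieIdeal ℤ (FreeLieAlgebra ℤ X) :=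
  LieSubmodule.lieSpan ℤ (FreeLieAlgebra ℤ X)
    {z | ∃ x y : X, Γ.Adj x y ∧ z = ⁅FreeLieAlgebra.of ℤ x, FreeLieAlgebra.of ℤ y⁆}

/-- In the free partially commutative Lie ℤ-algebra `L(X; Γ)` of a finite simple graph
`Γ`, the bracket of two distinct non-adjacent generators is nonzero. -/
theorem pc_lie_algebra_bracket_ne_zero {X : Type*} [Fintype X] (Γ : SimpleGraph X)
    (x y : X) (hxy : x ≠ y) (hadj : ¬ Γ.Adj x y) :
    (LieSubmodule.Quotient.mk (N := graphLieIdeal Γ)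
        ⁅FreeLieAlgebra.of ℤ x, FreeLieAlgebra.of ℤ y⁆ :
      FreeLieAlgebra ℤ X ⧸ graphLieIdeal Γ) ≠ 0 := by
  classical
  letI : LieRing (Matrix (Fin 3) (Fin 3) ℤ) := LieRing.ofAssociativeRing
  letI : LieAlgebra ℤ (Matrix (Fin 3) (Fin 3) ℤ) := LieAlgebra.ofAssociativeAlgebra
  -- Target: 3×3 integer matrices with the commutator bracket.
  let f : X → Matrix (Fin 3) (Fin 3) ℤ := fun u =>
    if u = x then Matrix.single 0 1 1
    else if u = y then Matrix.single 1 2 1 else 0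
  let F : FreeLieAlgebra ℤ X →ₗ⁅ℤ⁆ Matrix (Fin 3) (Fin 3) ℤ := FreeLieAlgebra.lift ℤ f
  have key : Matrix.single (0 : Fin 3) (1 : Fin 3) (1 : ℤ) *
        Matrix.single (1 : Fin 3) (2 : Fin 3) (1 : ℤ)
      = Matrix.single (0 : Fin 3) (2 : Fin 3) (1 : ℤ) := by
    rw [Matrix.single_mul_single_same, one_mul]
  have key2 : Matrix.single (1 : Fin 3) (2 : Fin 3) (1 : ℤ) *
        Matrix.single (0 : Fin 3) (1 : Fin 3) (1 : ℤ)
      = 0 := by ext a b; simp [Matrix.mul_apply, Matrix.single, Fin.sum_univ_three]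
  have hker : graphLieIdeal Γ ≤ F.ker := by
    rw [graphLieIdeal, LieSubmodule.lieSpan_le]
    rintro z ⟨u, v, huv, rfl⟩
    simp only [SetLike.mem_coe, LieHom.mem_ker, LieHom.map_lie]
    have hFu : F (FreeLieAlgebra.of ℤ u) = f u := FreeLieAlgebra.lift_of_apply f u
    have hFv : F (FreeLieAlgebra.of ℤ v) = f v := FreeLieAlgebra.lift_of_apply f v
    rw [hFu, hFv, Ring.lie_def]
    have hne : ¬(u = x ∧ v = y) := fun ⟨h1, h2⟩ => hadj (h1 ▸ h2 ▸ huv)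
    have hne' : ¬(u = y ∧ v = x) := fun ⟨h1, h2⟩ => hadj (h1 ▸ h2 ▸ huv.symm)
    have hu : u ≠ v := huv.ne
    simp only [f]
    by_cases h1 : u = x <;> by_cases h2 : v = y <;>
      by_cases h3 : u = y <;> by_cases h4 : v = x <;>
      simp_all [key2, Ring.lie_def]
  intro h
  rw [LieSubmodule.Quotient.mk_eq_zero'] at h
  have h0 : F ⁅FreeLieAlgebra.of ℤ x, FreeLieAlgebra.of ℤ y⁆ = 0 := hker h
  rw [LieHom.map_lie, (show F (FreeLieAlgebra.of ℤ x) = f x from FreeLieAlgebra.lift_of_apply f x),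
    (show F (FreeLieAlgebra.of ℤ y) = f y from FreeLieAlgebra.lift_of_apply f y),
    Ring.lie_def] at h0
  simp only [f, if_pos rfl, if_neg hxy.symm, if_neg (Ne.symm hxy), if_true] at h0
  rw [key, key2, sub_zero] at h0
  have := congrFun (congrFun h0 0) 2
  simp [Matrix.single_apply_same] at this
end
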